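/- Let q, ζ ∈ ℂ with |q| > 1 and ζ a primitive t-th root of unity, and let k₀, …, k_{t−1} ∈ ℤ. Suppose there exists a nonzero rational function b ∈ ℂ(z) such that (−qz)^{k₀}·(−qζz)^{k₁}·⋯·(−qζ^{t−1}z)^{k_{t−1}} = b(qz)/b(z). Then k₀ + k₁ + ⋯ + k_{t−1} = 0. -/

import Mathlib

open Polynomial RatFunc

private lemma zpow_prod_sum {G : Type*} [CommGroupWithZero G] (x : G) (hx : x ≠ 0)
    (s : Finset ℕ) (k : ℕ → ℤ) : ∏ i ∈ s, x ^ (k i) = x ^ (∑ i ∈ s, k i) := by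
  classical
  induction s using Finset.induction with
  | empty => simp
  | insert _ _ h ih =>
    rw [Finset.prod_insert h, Finset.sum_insert h, zpow_add₀ hx, ih]

private lemma intDegree_zpow' (x : RatFunc ℂ) (hx : x ≠ 0) (n : ℤ) :
    (x ^ n).intDegree = n * x.intDegree := by
  have hnat : ∀ m : ℕ, (x ^ m).intDegree = m * x.intDegree := by
    intro m
    induction m with
    | zero => simp [RatFunc.intDegree_one]
    | succ m ih =>
      rw [pow_succ, RatFunc.intDegree_mul (pow_ne_zero m hx) hx, ih]
      push_cast; ring
  have hinv : ∀ y : RatFunc ℂ, y ≠ 0 → (y⁻¹).intDegree = -y.intDegree := by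
    intro y hy
    have := RatFunc.intDegree_mul (inv_ne_zero hy) hy
    rw [inv_mul_cancel₀ hy, RatFunc.intDegree_one] at this
    linarith
  cases n with
  | ofNat m => simpa using hnat m
  | negSucc m =>
    rw [zpow_negSucc, hinv _ (pow_ne_zero _ hx), hnat, Int.negSucc_eq]
    push_cast; ring

/-- If `(−qz)^{k₀}(−qζz)^{k₁}⋯(−qζ^{t−1}z)^{k_{t−1}} = b(qz)/b(z)` for a nonzero
`b ∈ ℂ(z)`, where `|q| > 1` and `ζ` is a primitive `t`-th root of unity, then
`k₀ + ⋯ + k_{t−1} = 0`. -/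
theorem stmt11 (q ζ : ℂ) (t : ℕ) (hq : 1 < ‖q‖) (hζ : IsPrimitiveRoot ζ t)
    (σ : RatFunc ℂ ≃ₐ[ℂ] RatFunc ℂ) (hσ : σ RatFunc.X = RatFunc.C q * RatFunc.X)
    (k : ℕ → ℤ) (b : RatFunc ℂ) (hb : b ≠ 0)
    (heq : ∏ i ∈ Finset.range t,
        (-(RatFunc.C q) * RatFunc.C ζ ^ i * RatFunc.X) ^ (k i) = σ b / b) :
    ∑ i ∈ Finset.range t, k i = 0 := by
  rcases Nat.eq_zero_or_pos t with rfl | ht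
  · simp
  have hq0 : q ≠ 0 := by
    intro h; rw [h] at hq; simp at hq; linarith
  have hζ0 : ζ ≠ 0 := hζ.ne_zero ht.ne'
  have hc0 : ∀ i : ℕ, (-q * ζ ^ i) ≠ 0 := fun i => by simp [hq0, hζ0]
  set K : ℤ := ∑ i ∈ Finset.range t, k i with hK
  set c : ℂ := ∏ i ∈ Finset.range t, (-q * ζ ^ i) ^ (k i) with hc
  have hcne : c ≠ 0 := Finset.prod_ne_zero_iff.mpr fun i _ => zpow_ne_zero _ (hc0 i)
  have hXne : (RatFunc.X : RatFunc ℂ) ≠ 0 := RatFunc.X_ne_zero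
  have hlhs : ∏ i ∈ Finset.range t,
      (-(RatFunc.C q) * RatFunc.C ζ ^ i * RatFunc.X) ^ (k i)
      = RatFunc.C c * RatFunc.X ^ K := by
    have h1 : ∀ i ∈ Finset.range t,
        (-(RatFunc.C q) * RatFunc.C ζ ^ i * RatFunc.X) ^ (k i)
        = RatFunc.C ((-q * ζ ^ i) ^ (k i)) * RatFunc.X ^ (k i) := by
      intro i _
      rw [map_zpow₀, map_mul, map_neg, map_pow, mul_zpow]
    rw [Finset.prod_congr rfl h1, Finset.prod_mul_distrib, ← map_prod, ← hc,
      zpow_prod_sum _ hXne, hK]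
  -- σ on polynomials
  have key : ∀ p : ℂ[X], σ (algebraMap ℂ[X] (RatFunc ℂ) p)
      = algebraMap ℂ[X] (RatFunc ℂ) (p.comp (Polynomial.C q * Polynomial.X)) := by
    intro p
    have := DFunLike.congr_fun (Polynomial.algHom_ext (R := ℂ)
      (f := (σ : RatFunc ℂ →ₐ[ℂ] RatFunc ℂ).comp (IsScalarTower.toAlgHom ℂ ℂ[X] (RatFunc ℂ)))
      (g := (IsScalarTower.toAlgHom ℂ ℂ[X] (RatFunc ℂ)).comp (Polynomial.aeval (Polynomial.C q * Polynomial.X)))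
      (by simp [RatFunc.algebraMap_X, hσ, RatFunc.algebraMap_C])) p
    simpa [Polynomial.aeval_def, Polynomial.eval₂_eq_eval_map, Polynomial.comp] using this
  have hcomp_ne : ∀ p : ℂ[X], p ≠ 0 → p.comp (Polynomial.C q * Polynomial.X) ≠ 0 := by
    intro p hp h
    rcases (Polynomial.comp_eq_zero_iff).mp h with h | ⟨_, h⟩
    · exact hp h
    · have := Polynomial.natDegree_C (((Polynomial.C q * Polynomial.X : ℂ[X])).coeff 0)
      rw [← h] at this
      rw [Polynomial.natDegree_C_mul hq0, Polynomial.natDegree_X] at this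
      exact one_ne_zero this
  have hcomp_deg : ∀ p : ℂ[X], (p.comp (Polynomial.C q * Polynomial.X)).natDegree = p.natDegree := by
    intro p
    rw [Polynomial.natDegree_comp]
    simp [Polynomial.natDegree_C_mul hq0]
  have degdiv : ∀ f g : ℂ[X], f ≠ 0 → g ≠ 0 →
      (algebraMap ℂ[X] (RatFunc ℂ) f / algebraMap ℂ[X] (RatFunc ℂ) g).intDegree
        = (f.natDegree : ℤ) - g.natDegree := by
    intro f g hf hg
    have hf' : algebraMap ℂ[X] (RatFunc ℂ) f ≠ 0 := RatFunc.algebraMap_ne_zero hf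
    have hg' : algebraMap ℂ[X] (RatFunc ℂ) g ≠ 0 := RatFunc.algebraMap_ne_zero hg
    have hdiv : algebraMap ℂ[X] (RatFunc ℂ) f / algebraMap ℂ[X] (RatFunc ℂ) g ≠ 0 :=
      div_ne_zero hf' hg'
    have h := RatFunc.intDegree_mul hdiv hg'
    rw [div_mul_cancel₀ _ hg', RatFunc.intDegree_polynomial, RatFunc.intDegree_polynomial] at h
    linarith
  have hσdeg : (σ b).intDegree = b.intDegree := by
    have hnum : b.num ≠ 0 := RatFunc.num_ne_zero hb
    have hden : b.denom ≠ 0 := b.denom_ne_zero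
    have hb' : b = algebraMap ℂ[X] (RatFunc ℂ) b.num / algebraMap ℂ[X] (RatFunc ℂ) b.denom :=
      (RatFunc.num_div_denom b).symm
    have hσb : σ b = algebraMap ℂ[X] (RatFunc ℂ) (b.num.comp (Polynomial.C q * Polynomial.X))
        / algebraMap ℂ[X] (RatFunc ℂ) (b.denom.comp (Polynomial.C q * Polynomial.X)) := by
      conv_lhs => rw [hb']
      rw [map_div₀, key, key]
    rw [hσb, degdiv _ _ (hcomp_ne _ hnum) (hcomp_ne _ hden), hcomp_deg, hcomp_deg]
    conv_rhs => rw [hb']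
    rw [degdiv _ _ hnum hden]
  have hσb_ne : σ b ≠ 0 := fun h => hb (by simpa using σ.injective (by simpa using h))
  have hdivne : σ b / b ≠ 0 := div_ne_zero hσb_ne hb
  have h1 : (RatFunc.C c * RatFunc.X ^ K).intDegree = K := by
    rw [RatFunc.intDegree_mul ((_root_.map_ne_zero RatFunc.C).mpr hcne) (zpow_ne_zero _ hXne),
      RatFunc.intDegree_C, intDegree_zpow' _ hXne, RatFunc.intDegree_X]
    ring
  have h2 : (σ b / b).intDegree = 0 := by
    have h := RatFunc.intDegree_mul hdivne hb
    rw [div_mul_cancel₀ _ hb, hσdeg] at h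
    linarith
  rw [hlhs] at heq
  rw [heq] at h1
  omega
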